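/- Let G be a group, N a normal subgroup of G of finite index, g ∈ G, and let m be the order of the coset gN in the finite group G/N. Suppose N ≅ F/⟪R⟫^F with F a free group of finite rank d and R ⊆ F finite with |R| = r. Let M be the image of N under the quotient map G → G/⟪g^m⟫^G. Then there exist a free group F' of rank d and a finite subset R' ⊆ F' with |R'| ≤ r + [G : N]/m such that M ≅ F'/⟪R'⟫^{F'}. -/

import Mathlib

/-- **Lemma 2.3.** Let `N ⊴ G` be of finite index, `g ∈ G`, and `m` the order of `gN` in
`G/N`. If `N` has a presentation with `d` generators and `r` relators, then the image `M`
of `N` in `Q = G/⟪g^m⟫` has a presentation with `d` generators and at most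
`r + [G : N]/m` relators. -/
theorem presentation_of_image_in_quotient
    {G : Type*} [Group G] (N : Subgroup G) [N.Normal] (hfi : N.FiniteIndex)
    (g : G) (d r : ℕ) (R : Finset (FreeGroup (Fin d))) (hcard : R.card = r)
    (hiso : Nonempty (↥N ≃*
      FreeGroup (Fin d) ⧸ Subgroup.normalClosure (R : Set (FreeGroup (Fin d))))) :
    ∃ R' : Finset (FreeGroup (Fin d)),
      R'.card ≤ r + N.index / orderOf (QuotientGroup.mk g : G ⧸ N) ∧
      Nonempty
        (↥(N.map (QuotientGroup.mk'
            (Subgroup.normalClosure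
              ({g ^ orderOf (QuotientGroup.mk g : G ⧸ N)} : Set G)))) ≃*
          FreeGroup (Fin d) ⧸ Subgroup.normalClosure (R' : Set (FreeGroup (Fin d)))) := by
  classical
  obtain ⟨e⟩ := hiso
  haveI := hfi
  set m := orderOf (QuotientGroup.mk g : G ⧸ N) with hm_def
  have hgm : g ^ m ∈ N := by
    rw [← QuotientGroup.eq_one_iff]
    have h1 : ((g ^ m : G) : G ⧸ N) = (QuotientGroup.mk g : G ⧸ N) ^ m := by
      simp
    rw [h1, hm_def, pow_orderOf_eq_one]
  have hm_pos : 0 < m := hm_def ▸ orderOf_pos _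
  set K := Subgroup.normalClosure ({g ^ m} : Set G) with hK_def
  set H := Subgroup.comap (QuotientGroup.mk' N)
    (Subgroup.zpowers (QuotientGroup.mk g : G ⧸ N)) with hH_def
  have hNH : N ≤ H := by
    intro x hx
    simp only [hH_def, Subgroup.mem_comap, QuotientGroup.mk'_apply]
    rw [(QuotientGroup.eq_one_iff x).mpr hx]
    exact one_mem _
  haveI : H.FiniteIndex := Subgroup.finiteIndex_of_le hNH
  haveI : Finite (G ⧸ H) := Subgroup.finite_quotient_of_finiteIndex
  haveI : Fintype (G ⧸ H) := Fintype.ofFinite _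
  have hHidx : H.index * m = N.index := by
    rw [hH_def, Subgroup.index_comap_of_surjective _ (QuotientGroup.mk'_surjective N),
      hm_def, ← Nat.card_zpowers]
    exact Subgroup.index_mul_card _
  -- decomposition lemma
  have hdec : ∀ x : G, ∃ n ∈ N, ∃ q : G ⧸ H, ∃ k : ℤ, x = n * q.out * g ^ k := by
    intro x
    obtain ⟨h, hh⟩ := QuotientGroup.mk_out_eq_mul H x
    have hmem : ((h : G)⁻¹) ∈ H := H.inv_mem h.2
    rw [Subgroup.mem_comap, Subgroup.mem_zpowers_iff] at hmem
    obtain ⟨k, hk⟩ := hmem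
    have hk' : ((g ^ k : G) : G ⧸ N) = (((h : G)⁻¹ : G) : G ⧸ N) := by
      simpa using hk
    have hn1 : (g ^ k)⁻¹ * (h : G)⁻¹ ∈ N := QuotientGroup.eq.mp hk'
    set t := (QuotientGroup.mk x : G ⧸ H).out with ht
    set n1 := (g ^ k)⁻¹ * (h : G)⁻¹ with hn1def
    have hx : x = t * g ^ k * n1 := by
      rw [hn1def, hh]
      group
    refine ⟨t * (g ^ k * n1 * (g ^ k)⁻¹) * t⁻¹,
      ‹N.Normal›.conj_mem _ (‹N.Normal›.conj_mem _ hn1 _) _,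
      QuotientGroup.mk x, k, ?_⟩
    rw [← ht, hx]; group
  -- the conjugating-element function
  set s : G ⧸ H → N := fun q =>
    ⟨q.out * g ^ m * q.out⁻¹, ‹N.Normal›.conj_mem _ hgm _⟩ with hs_def
  set P : Subgroup N := Subgroup.normalClosure (Set.range s) with hP_def
  have hsK : ∀ q : G ⧸ H, ((s q : G)) ∈ K := fun q =>
    Subgroup.normalClosure_normal.conj_mem _
      (Subgroup.subset_normalClosure (Set.mem_singleton _)) _
  -- K.subgroupOf N = P
  have hKP : K.subgroupOf N = P := by
    apply le_antisymm
    · -- K ≤ map N.subtype P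
      have hKle : K ≤ Subgroup.map N.subtype P := by
        rw [hK_def, Subgroup.normalClosure]
        rw [Subgroup.closure_le]
        intro a ha
        rw [Group.mem_conjugatesOfSet_iff] at ha
        obtain ⟨b, hb, hconj⟩ := ha
        rw [Set.mem_singleton_iff] at hb
        subst hb
        obtain ⟨c, hc⟩ := isConj_iff.mp hconj
        obtain ⟨n, hn, q, k, hxd⟩ := hdec c
        have ha' : a = n * (s q : G) * n⁻¹ := by
          rw [← hc, hxd, hs_def]
          simp only [Subgroup.coe_mk]
          have : g ^ k * g ^ m * (g ^ k)⁻¹ = g ^ m := by group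
          group
        refine Subgroup.mem_map.mpr ⟨⟨n, hn⟩ * s q * ⟨n, hn⟩⁻¹,
          Subgroup.normalClosure_normal.conj_mem _
            (Subgroup.subset_normalClosure (Set.mem_range_self q)) _, ?_⟩
        rw [ha']
        push_cast
        rfl
      intro x hx
      have : (x : G) ∈ Subgroup.map N.subtype P := hKle hx
      obtain ⟨y, hy, hyx⟩ := Subgroup.mem_map.mp this
      have : y = x := Subtype.ext hyx
      rwa [← this]
    · refine Subgroup.normalClosure_le_normal ?_
      rintro _ ⟨q, rfl⟩
      exact hsK q
  -- first isomorphism: M ≃* N ⧸ P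
  set φ := (QuotientGroup.mk' K).domRestrict N with hφ
  have hker : φ.ker = P := by
    rw [hφ, MonoidHom.ker_domRestrict, QuotientGroup.ker_mk', hKP]
  have hrange : φ.range = N.map (QuotientGroup.mk' K) := by
    rw [hφ, MonoidHom.domRestrict_range]
  haveI : P.Normal := Subgroup.normalClosure_normal
  haveI : φ.ker.Normal := MonoidHom.normal_ker φ
  have e1 : ↥(N.map (QuotientGroup.mk' K)) ≃* N ⧸ P :=
    ((MulEquiv.subgroupCongr hrange).symm.trans
      (QuotientGroup.quotientKerEquivRange φ).symm).trans
      (QuotientGroup.quotientMulEquivOfEq hker)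
  -- transfer across e
  set A := Subgroup.normalClosure (R : Set (FreeGroup (Fin d))) with hA_def
  set Pq := Subgroup.map (e : ↥N →* FreeGroup (Fin d) ⧸ A) P with hPq_def
  haveI : Pq.Normal := Subgroup.Normal.map ‹P.Normal› _ e.surjective
  have e2 : (↥N ⧸ P) ≃* (FreeGroup (Fin d) ⧸ A) ⧸ Pq :=
    QuotientGroup.congr P Pq e rfl
  -- lifts
  set c : G ⧸ H → FreeGroup (Fin d) := fun q => (e (s q)).out with hc_def
  set R' : Finset (FreeGroup (Fin d)) := R ∪ Finset.image c Finset.univ with hR'_def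
  set B := Subgroup.normalClosure (R' : Set (FreeGroup (Fin d))) with hB_def
  have hAB : A ≤ B := by
    rw [hA_def, hB_def]
    apply Subgroup.normalClosure_mono
    intro x hx
    simp only [hR'_def, Finset.coe_union, Set.mem_union]
    exact Or.inl hx
  have hmapB : Subgroup.map (QuotientGroup.mk' A) B = Pq := by
    rw [hB_def, Subgroup.map_normalClosure _ _ (QuotientGroup.mk'_surjective A)]
    have hcoe : (R' : Set (FreeGroup (Fin d))) =
        (R : Set (FreeGroup (Fin d))) ∪ Set.range c := by
      rw [hR'_def]
      simp [Finset.coe_union, Finset.coe_image]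
    have hfun : (QuotientGroup.mk' A) ∘ c = fun q : G ⧸ H => e (s q) :=
      funext fun q => QuotientGroup.out_eq' _
    have himg : (QuotientGroup.mk' A) '' (R' : Set (FreeGroup (Fin d))) =
        (QuotientGroup.mk' A) '' (R : Set (FreeGroup (Fin d))) ∪
          Set.range (fun q : G ⧸ H => e (s q)) := by
      rw [hcoe, Set.image_union, ← Set.range_comp, hfun]
    rw [himg]
    apply le_antisymm
    · apply Subgroup.normalClosure_le_normal
      rintro x (⟨y, hy, rfl⟩ | ⟨q, rfl⟩)
      · have : (QuotientGroup.mk' A) y = 1 := by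
          rw [← MonoidHom.mem_ker, QuotientGroup.ker_mk']
          exact Subgroup.subset_normalClosure hy
        rw [this]
        exact one_mem _
      · rw [hPq_def]
        exact ⟨s q, Subgroup.subset_normalClosure (Set.mem_range_self q), rfl⟩
    · rw [hPq_def, hP_def, Subgroup.map_normalClosure _ _ e.surjective]
      apply Subgroup.normalClosure_mono
      intro x hx
      obtain ⟨y, hy, rfl⟩ := hx
      obtain ⟨q, rfl⟩ := hy
      exact Set.mem_union_right _ ⟨q, rfl⟩
  haveI : (Subgroup.map (QuotientGroup.mk' A) B).Normal := hmapB ▸ ‹Pq.Normal›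
  have e3 : (FreeGroup (Fin d) ⧸ A) ⧸ Pq ≃*
      FreeGroup (Fin d) ⧸ B :=
    (QuotientGroup.quotientMulEquivOfEq hmapB.symm).trans
      (QuotientGroup.quotientQuotientEquivQuotient A B hAB)
  refine ⟨R', ?_, ⟨(e1.trans e2).trans e3⟩⟩
  -- cardinality bound
  have h1 : R'.card ≤ R.card + (Finset.image c Finset.univ).card :=
    Finset.card_union_le _ _
  have h2 : (Finset.image c Finset.univ).card ≤ Fintype.card (G ⧸ H) := by
    calc (Finset.image c Finset.univ).card ≤ Finset.univ.card := Finset.card_image_le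
    _ = Fintype.card (G ⧸ H) := rfl
  have h3 : Fintype.card (G ⧸ H) = H.index := by
    rw [Subgroup.index, Nat.card_eq_fintype_card]
  have h4 : H.index = N.index / m := by
    rw [← hHidx, Nat.mul_div_cancel _ hm_pos]
  omega
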